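/- arXiv:1108.4606 — 3 statements merged into one kernel-verified Lean document; each statement's English description precedes it below -/
import Mathlib

section
/- Let G be a general-ladder with layers L_0, L_1, …, L_M, let i∈{0,1,2}, let R_i = ∪_{j≥0} L_{3j+i}, let G_i be the corresponding subinstance, and let H_i be the reduced graph of G_i. Then every vertex v ∈ V_i ∖ R_i is incident to at most one edge of G_i that is removed in forming H_i. -/
open Finset

variable {V : Type*} [Fintype V] [DecidableEq V]

/-- The closed neighborhood `N[v]` of a vertex. -/
def closedNbhd (G : SimpleGraph V) [DecidableRel G.Adj] (v : V) : Finset V :=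
  insert v (G.neighborFinset v)

/-- A demand assignment: nonnegative, supported on closed neighborhoods. -/
def IsAssignment (G : SimpleGraph V) [DecidableRel G.Adj] (f : V → V → ℝ) : Prop :=
  (∀ u v, 0 ≤ f u v) ∧ ∀ u v, v ∉ closedNbhd G u → f u v = 0

/-- Feasibility: the demand of every vertex is fully assigned. -/
def Feasible (G : SimpleGraph V) [DecidableRel G.Adj] (d : V → ℝ) (f : V → V → ℝ) : Prop :=
  IsAssignment G f ∧ ∀ u, d u ≤ ∑ v ∈ closedNbhd G u, f u v

/-- Multiplicity `x_f(v) = ⌈(Σ_{u∈N[v]} f(u,v))/c(v)⌉`. -/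
noncomputable def mult (G : SimpleGraph V) [DecidableRel G.Adj] (c : V → ℝ)
    (f : V → V → ℝ) (v : V) : ℤ :=
  ⌈(∑ u ∈ closedNbhd G v, f u v) / c v⌉

/-- Cost of a demand assignment. -/
noncomputable def cost (G : SimpleGraph V) [DecidableRel G.Adj] (w c : V → ℝ)
    (f : V → V → ℝ) : ℝ :=
  ∑ v, w v * (mult G c f v : ℝ)

/-- Optimal cost of a feasible demand assignment. -/
noncomputable def OPT (G : SimpleGraph V) [DecidableRel G.Adj] (w c d : V → ℝ) : ℝ :=
  sInf {r | ∃ f, Feasible G d f ∧ cost G w c f = r}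

/-- Feasibility for the LP relaxation of capacitated domination. -/
def LPFeasible (G : SimpleGraph V) [DecidableRel G.Adj] (c d : V → ℝ)
    (x : V → ℝ) (f : V → V → ℝ) : Prop :=
  (∀ u, 0 ≤ x u) ∧ IsAssignment G f ∧
  (∀ u, d u ≤ ∑ v ∈ closedNbhd G u, f u v) ∧
  (∀ u, ∑ v ∈ closedNbhd G u, f v u ≤ c u * x u) ∧
  (∀ u, ∀ v ∈ closedNbhd G u, f v u ≤ d v * x u)

/-- Optimal value `OPT_f(G)` of the LP relaxation. -/
noncomputable def OPTf (G : SimpleGraph V) [DecidableRel G.Adj] (w c d : V → ℝ) : ℝ :=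
  sInf {r | ∃ x f, LPFeasible G c d x f ∧ ∑ u, w u * x u = r}

/-- The subinstance graph on the same vertex set: keep exactly the edges of `G`
incident to a vertex of `R` (vertices outside `V_i = ∪_{v∈R} N[v]` become
isolated). -/
def subGraph (G : SimpleGraph V) (R : Finset V) : SimpleGraph V where
  Adj a b := G.Adj a b ∧ (a ∈ R ∨ b ∈ R)
  symm := ⟨fun a b h => ⟨h.1.symm, h.2.symm⟩⟩
  loopless := ⟨fun a h => G.loopless.irrefl a h.1⟩

instance (G : SimpleGraph V) [DecidableRel G.Adj] (R : Finset V) :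
    DecidableRel (subGraph G R).Adj :=
  fun a b => inferInstanceAs (Decidable (G.Adj a b ∧ (a ∈ R ∨ b ∈ R)))

/-- The demands of the subinstance: `d` on `R`, zero elsewhere. -/
def subDemand (d : V → ℝ) (R : Finset V) : V → ℝ :=
  fun v => if v ∈ R then d v else 0

/-- `G` together with the layer map `L` is a general-ladder (with respect to the
total order on `V`): layer `0` is a single vertex (the anchor); edges inside a
layer join consecutive vertices of the layer; all edges join vertices of the
same or adjacent layers; and neighborhoods into the next layer respect the
order. -/
structure IsGeneralLadder [LinearOrder V] (G : SimpleGraph V) (L : V → ℕ) : Prop where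
  anchor : ∃ a, ∀ v, L v = 0 ↔ v = a
  intra_consecutive : ∀ u v, G.Adj u v → L u = L v → u < v →
      ∀ z, L z = L u → u < z → z < v → False
  adj_layers : ∀ u v, G.Adj u v → L u ≤ L v + 1 ∧ L v ≤ L u + 1
  mono : ∀ u v, L u = L v → u < v → ∀ p q, G.Adj u p → G.Adj v q →
      L p = L u + 1 → L q = L v + 1 → p ≤ q

/-- Vertices lying in the layers `L_{3j+i}`, `j ≥ 0`. -/
def layerClass (L : V → ℕ) (i : ℕ) : Finset V :=
  Finset.univ.filter (fun v => L v % 3 = i)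

/-- The set of maximum elements of a finite set (empty or a singleton). -/
def maxSet [LinearOrder V] (s : Finset V) : Finset V :=
  s.filter (fun p => ∀ q ∈ s, q ≤ p)

/-- The data of the reduction: for every `v ∈ R`, a listing of `N[v]` in
nondecreasing order of cost (any tie-breaking), together with the index `jIdx v`
of the first entry of capacity exceeding `d v` (`= length` if there is none) and
an index `kIdx v` before it minimizing the cost/capacity ratio among the entries
before `jIdx v` (set to `0` when `jIdx v = 0`, i.e. when `k_v` is undefined). -/
structure ReductionData [LinearOrder V] (G : SimpleGraph V) [DecidableRel G.Adj]
    (w c d : V → ℝ) (R : Finset V) where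
  l : V → List V
  nodup : ∀ v ∈ R, (l v).Nodup
  mem_iff : ∀ v ∈ R, ∀ x, x ∈ l v ↔ x ∈ closedNbhd G v
  sorted : ∀ v ∈ R, (l v).Pairwise (fun a b => w a ≤ w b)
  jIdx : V → ℕ
  jIdx_le : ∀ v ∈ R, jIdx v ≤ (l v).length
  c_le_before_j : ∀ v ∈ R, ∀ m, (hm : m < (l v).length) → m < jIdx v →
      c ((l v).get ⟨m, hm⟩) ≤ d v
  c_gt_at_j : ∀ v ∈ R, ∀ (hj : jIdx v < (l v).length),
      d v < c ((l v).get ⟨jIdx v, hj⟩)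
  kIdx : V → ℕ
  kIdx_lt_j : ∀ v ∈ R, 0 < jIdx v → kIdx v < jIdx v
  kIdx_eq_zero : ∀ v ∈ R, jIdx v = 0 → kIdx v = 0
  k_ratio_min : ∀ v ∈ R, ∀ m, (hm : m < (l v).length) → m < jIdx v →
      ∀ (hk : kIdx v < (l v).length),
      w ((l v).get ⟨kIdx v, hk⟩) / c ((l v).get ⟨kIdx v, hk⟩) ≤
        w ((l v).get ⟨m, hm⟩) / c ((l v).get ⟨m, hm⟩)

/-- For `v ∈ R` in layer `ℓ`, the neighbors that are kept:
`(N[v] ∩ L_ℓ) ∪ {j_v, k_v, p_v, q_v}` where `p_v` (resp. `q_v`) is the largest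
neighbor of `v` in layer `ℓ-1` (resp. `ℓ+1`). -/
def keepSet [LinearOrder V] (G : SimpleGraph V) [DecidableRel G.Adj]
    {w c d : V → ℝ} {R : Finset V} (L : V → ℕ)
    (data : ReductionData G w c d R) (v : V) : Finset V :=
  ((closedNbhd G v).filter (fun x => L x = L v)) ∪
  {(data.l v).getD (data.jIdx v) v, (data.l v).getD (data.kIdx v) v} ∪
  maxSet ((closedNbhd G v).filter (fun x => L x + 1 = L v)) ∪
  maxSet ((closedNbhd G v).filter (fun x => L x = L v + 1))

/-- The reduced graph: delete every edge from a vertex `v ∈ R` to a neighbor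
outside `L_ℓ ∪ {j_v, k_v, p_v, q_v}`. -/
def reducedGraph [LinearOrder V] (G : SimpleGraph V) [DecidableRel G.Adj]
    {w c d : V → ℝ} {R : Finset V} (L : V → ℕ)
    (data : ReductionData G w c d R) : SimpleGraph V where
  Adj a b := G.Adj a b ∧ (a ∈ R → b ∈ keepSet G L data a) ∧
      (b ∈ R → a ∈ keepSet G L data b)
  symm := ⟨fun a b h => ⟨h.1.symm, h.2.2, h.2.1⟩⟩
  loopless := ⟨fun a h => G.loopless.irrefl a h.1⟩

instance [LinearOrder V] (G : SimpleGraph V) [DecidableRel G.Adj]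
    {w c d : V → ℝ} {R : Finset V} (L : V → ℕ) (data : ReductionData G w c d R) :
    DecidableRel (reducedGraph G L data).Adj :=
  fun a b => inferInstanceAs (Decidable (G.Adj a b ∧ (a ∈ R → b ∈ keepSet G L data a) ∧
      (b ∈ R → a ∈ keepSet G L data b)))

set_option maxHeartbeats 2000000 in
/-- in the reduction from `G_i` to `H_i`, every vertex of
`V_i ∖ R_i` loses at most one incident edge. -/
theorem reduction_loses_at_most_one_edge [LinearOrder V]
    (G : SimpleGraph V) [DecidableRel G.Adj] (L : V → ℕ)
    (hGL : IsGeneralLadder G L)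
    (w c d : V → ℝ) (hw : ∀ v, 0 ≤ w v) (hc : ∀ v, 0 < c v) (hd : ∀ v, 0 ≤ d v)
    (i : ℕ) (hi : i < 3)
    (data : ReductionData (subGraph G (layerClass L i)) w c d (layerClass L i)) :
    ∀ v ∈ (layerClass L i).biUnion (fun x => closedNbhd G x), v ∉ layerClass L i →
      (((subGraph G (layerClass L i)).neighborFinset v) \
        ((reducedGraph (subGraph G (layerClass L i)) L data).neighborFinset v)).card ≤ 1 := by
  classical
  intro v _hv hvR
  have hR : layerClass L i = layerClass L i := rfl
  rw [Finset.card_le_one]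
  -- Extract the key facts about any vertex in the difference set.
  have key : ∀ u ∈ ((subGraph G (layerClass L i)).neighborFinset v) \
      ((reducedGraph (subGraph G (layerClass L i)) L data).neighborFinset v),
      G.Adj v u ∧ u ∈ (layerClass L i) ∧ L u ≠ L v ∧
      v ∉ maxSet ((closedNbhd (subGraph G (layerClass L i)) u).filter (fun x => L x + 1 = L u)) ∧
      v ∉ maxSet ((closedNbhd (subGraph G (layerClass L i)) u).filter (fun x => L x = L u + 1)) := by
    intro u hu
    rw [Finset.mem_sdiff, SimpleGraph.mem_neighborFinset,
      SimpleGraph.mem_neighborFinset] at hu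
    obtain ⟨hadj, hnadj⟩ := hu
    have hGadj : G.Adj v u := hadj.1
    have huR : u ∈ (layerClass L i) := by
      rcases hadj.2 with h | h
      · exact absurd h hvR
      · exact h
    have hvk : v ∉ keepSet (subGraph G (layerClass L i)) L data u := by
      intro hk
      exact hnadj ⟨hadj, fun h => absurd h hvR, fun _ => hk⟩
    have hvN : v ∈ closedNbhd (subGraph G (layerClass L i)) u := by
      unfold closedNbhd
      rw [Finset.mem_insert, SimpleGraph.mem_neighborFinset]
      exact Or.inr hadj.symm
    unfold keepSet at hvk
    simp only [Finset.mem_union, not_or] at hvk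
    obtain ⟨⟨⟨h1, _⟩, h2⟩, h3⟩ := hvk
    have hne : L u ≠ L v := by
      intro h
      exact h1 (Finset.mem_filter.mpr ⟨hvN, h.symm⟩)
    exact ⟨hGadj, huR, hne, h2, h3⟩
  -- Main argument: any two vertices of the difference set are equal.
  intro u1 hu1 u2 hu2
  by_contra hne12
  obtain ⟨hadj1, huR1, hne1, hmax1a, hmax1b⟩ := key u1 hu1
  obtain ⟨hadj2, huR2, hne2, hmax2a, hmax2b⟩ := key u2 hu2
  -- set up symmetry: wlog u1 < u2
  clear hu1 hu2
  wlog hlt : u1 < u2 generalizing u1 u2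
  · exact this u2 u1 (Ne.symm hne12) hadj2 huR2 hne2 hmax2a hmax2b
      hadj1 huR1 hne1 hmax1a hmax1b
      (lt_of_le_of_ne (not_lt.mp hlt) (Ne.symm hne12))
  -- layer arithmetic
  have hmod1 : L u1 % 3 = i := by
    have := huR1; rw [layerClass, Finset.mem_filter] at this; exact this.2
  have hmod2 : L u2 % 3 = i := by
    have := huR2; rw [layerClass, Finset.mem_filter] at this; exact this.2
  have hmodv : L v % 3 ≠ i := by
    intro h
    exact hvR (by rw [layerClass, Finset.mem_filter]; exact ⟨Finset.mem_univ v, h⟩)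
  have hlay1 := hGL.adj_layers v u1 hadj1
  have hlay2 := hGL.adj_layers v u2 hadj2
  have hcase : (L u1 = L v + 1 ∧ L u2 = L v + 1) ∨
      (L v = L u1 + 1 ∧ L v = L u2 + 1) := by omega
  rcases hcase with ⟨hc1, hc2⟩ | ⟨hc1, hc2⟩
  · -- v is in the layer below u1, u2; use failure of u1
    have hvmem : v ∈ (closedNbhd (subGraph G (layerClass L i)) u1).filter (fun x => L x + 1 = L u1) := by
      refine Finset.mem_filter.mpr ⟨?_, hc1.symm⟩
      unfold closedNbhd
      rw [Finset.mem_insert, SimpleGraph.mem_neighborFinset]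
      exact Or.inr (SimpleGraph.Adj.symm ⟨hadj1, Or.inr huR1⟩)
    have : ∃ q ∈ (closedNbhd (subGraph G (layerClass L i)) u1).filter (fun x => L x + 1 = L u1), ¬ q ≤ v := by
      by_contra hcon
      push_neg at hcon
      exact hmax1a (Finset.mem_filter.mpr ⟨hvmem, hcon⟩)
    obtain ⟨q, hq, hqv⟩ := this
    rw [Finset.mem_filter] at hq
    obtain ⟨hqN, hqL⟩ := hq
    have hqne : q ≠ u1 := by intro h; rw [h] at hqL; omega
    have hqadj : G.Adj q u1 := by
      unfold closedNbhd at hqN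
      rw [Finset.mem_insert, SimpleGraph.mem_neighborFinset] at hqN
      rcases hqN with h | h
      · exact absurd h hqne
      · exact h.1.symm
    have := hGL.mono v q (by omega) (not_le.mp hqv) u2 u1 hadj2 hqadj
      (by omega) (by omega)
    exact absurd this (not_le.mpr hlt)
  · -- v is in the layer above u1, u2; use failure of u1
    have hvmem : v ∈ (closedNbhd (subGraph G (layerClass L i)) u1).filter (fun x => L x = L u1 + 1) := by
      refine Finset.mem_filter.mpr ⟨?_, hc1⟩
      unfold closedNbhd
      rw [Finset.mem_insert, SimpleGraph.mem_neighborFinset]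
      exact Or.inr (SimpleGraph.Adj.symm ⟨hadj1, Or.inr huR1⟩)
    have : ∃ q ∈ (closedNbhd (subGraph G (layerClass L i)) u1).filter (fun x => L x = L u1 + 1), ¬ q ≤ v := by
      by_contra hcon
      push_neg at hcon
      exact hmax1b (Finset.mem_filter.mpr ⟨hvmem, hcon⟩)
    obtain ⟨q, hq, hqv⟩ := this
    rw [Finset.mem_filter] at hq
    obtain ⟨hqN, hqL⟩ := hq
    have hqne : q ≠ u1 := by intro h; rw [h] at hqL; omega
    have hqadj : G.Adj u1 q := by
      unfold closedNbhd at hqN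
      rw [Finset.mem_insert, SimpleGraph.mem_neighborFinset] at hqN
      rcases hqN with h | h
      · exact absurd h hqne
      · exact h.1
    have := hGL.mono u1 u2 (by omega) hlt q v hqadj hadj2.symm
      (by omega) (by omega)
    exact hqv this
end

section
/- Let G be a general-ladder with layers L_0, L_1, …, L_M, let i∈{0,1,2}, let R_i = ∪_{j≥0} L_{3j+i}, let G_i be the corresponding subinstance, and let H_i be the reduced graph of G_i. Then every vertex v ∈ R_i has degree at most 6 in H_i (hence its closed neighborhood in H_i has size at most 7). -/
open Finset

variable {V : Type*} [Fintype V] [DecidableEq V]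

/-- in the reduced graph `H_i`, every vertex of `R_i` has degree at
most `6` (so its closed neighborhood has size at most `7`). -/
theorem reduction_degree_bound [LinearOrder V]
    (G : SimpleGraph V) [DecidableRel G.Adj] (L : V → ℕ)
    (hGL : IsGeneralLadder G L)
    (w c d : V → ℝ) (hw : ∀ v, 0 ≤ w v) (hc : ∀ v, 0 < c v) (hd : ∀ v, 0 ≤ d v)
    (i : ℕ) (hi : i < 3)
    (data : ReductionData (subGraph G (layerClass L i)) w c d (layerClass L i)) :
    ∀ v ∈ layerClass L i,
      (reducedGraph (subGraph G (layerClass L i)) L data).degree v ≤ 6 ∧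
      (closedNbhd (reducedGraph (subGraph G (layerClass L i)) L data) v).card ≤ 7 := by
  intro v hv
  set G' := subGraph G (layerClass L i) with hG'
  set H := reducedGraph G' L data with hH
  -- the same-layer part has at most 3 elements
  set A : Finset V := (closedNbhd G' v).filter (fun x => L x = L v) with hA
  have hAmem : ∀ x ∈ A, x ≠ v → G.Adj v x ∧ L x = L v := by
    intro x hx hxv
    simp only [hA, Finset.mem_filter, closedNbhd, Finset.mem_insert,
      SimpleGraph.mem_neighborFinset] at hx
    rcases hx with ⟨hx1 | hx1, hx2⟩
    · exact absurd hx1 hxv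
    · exact ⟨hx1.1, hx2⟩
  have hlow : (A.filter (fun x => x < v)).card ≤ 1 := by
    apply Finset.card_le_one.mpr
    intro a ha b hb
    simp only [Finset.mem_filter] at ha hb
    by_contra hne
    rcases lt_trichotomy a b with h | h | h
    · obtain ⟨hadj, hL⟩ := hAmem a ha.1 (ne_of_lt ha.2)
      obtain ⟨hadj', hL'⟩ := hAmem b hb.1 (ne_of_lt hb.2)
      exact hGL.intra_consecutive a v hadj.symm hL ha.2 b (hL'.trans hL.symm) h hb.2
    · exact hne h
    · obtain ⟨hadj, hL⟩ := hAmem b hb.1 (ne_of_lt hb.2)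
      obtain ⟨hadj', hL'⟩ := hAmem a ha.1 (ne_of_lt ha.2)
      exact hGL.intra_consecutive b v hadj.symm hL hb.2 a (hL'.trans hL.symm) h ha.2
  have hhigh : (A.filter (fun x => v < x)).card ≤ 1 := by
    apply Finset.card_le_one.mpr
    intro a ha b hb
    simp only [Finset.mem_filter] at ha hb
    by_contra hne
    rcases lt_trichotomy a b with h | h | h
    · obtain ⟨hadj, hL⟩ := hAmem a ha.1 (ne_of_gt ha.2)
      obtain ⟨hadj', hL'⟩ := hAmem b hb.1 (ne_of_gt hb.2)
      exact hGL.intra_consecutive v b hadj' hL'.symm hb.2 a hL ha.2 h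
    · exact hne h
    · obtain ⟨hadj, hL⟩ := hAmem a ha.1 (ne_of_gt ha.2)
      obtain ⟨hadj', hL'⟩ := hAmem b hb.1 (ne_of_gt hb.2)
      exact hGL.intra_consecutive v a hadj hL.symm ha.2 b hL' hb.2 h
  have hAcard : A.card ≤ 3 := by
    have hsub : A ⊆ insert v ((A.filter (fun x => x < v)) ∪ (A.filter (fun x => v < x))) := by
      intro x hx
      rcases lt_trichotomy x v with h | h | h
      · exact Finset.mem_insert_of_mem (Finset.mem_union_left _ (Finset.mem_filter.mpr ⟨hx, h⟩))
      · simp [h]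
      · exact Finset.mem_insert_of_mem (Finset.mem_union_right _ (Finset.mem_filter.mpr ⟨hx, h⟩))
    have h1 := Finset.card_le_card hsub
    have h2 := Finset.card_insert_le v ((A.filter (fun x => x < v)) ∪ (A.filter (fun x => v < x)))
    have h3 := Finset.card_union_le (A.filter (fun x => x < v)) (A.filter (fun x => v < x))
    omega
  have hmaxcard : ∀ s : Finset V, (maxSet s).card ≤ 1 := by
    intro s
    apply Finset.card_le_one.mpr
    intro a ha b hb
    simp only [maxSet, Finset.mem_filter] at ha hb
    exact le_antisymm (hb.2 a ha.1) (ha.2 b hb.1)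
  have hkeep : (keepSet G' L data v).card ≤ 7 := by
    unfold keepSet
    calc _ ≤ _ := Finset.card_union_le _ _
      _ ≤ (A ∪ {(data.l v).getD (data.jIdx v) v, (data.l v).getD (data.kIdx v) v}).card
          + (maxSet ((closedNbhd G' v).filter (fun x => L x + 1 = L v))).card
          + (maxSet ((closedNbhd G' v).filter (fun x => L x = L v + 1))).card := by
        exact Nat.add_le_add_right (Finset.card_union_le _ _) _
      _ ≤ (A.card + 2) + 1 + 1 := by
        have h1 := Finset.card_union_le A
          ({(data.l v).getD (data.jIdx v) v, (data.l v).getD (data.kIdx v) v} : Finset V)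
        have h2 : ({(data.l v).getD (data.jIdx v) v, (data.l v).getD (data.kIdx v) v} :
            Finset V).card ≤ 2 := Finset.card_insert_le _ _ |>.trans (by simp)
        have := hmaxcard ((closedNbhd G' v).filter (fun x => L x + 1 = L v))
        have := hmaxcard ((closedNbhd G' v).filter (fun x => L x = L v + 1))
        omega
      _ ≤ 7 := by omega
  have hvkeep : v ∈ keepSet G' L data v := by
    unfold keepSet
    apply Finset.mem_union_left
    apply Finset.mem_union_left
    apply Finset.mem_union_left
    exact Finset.mem_filter.mpr ⟨Finset.mem_insert_self _ _, rfl⟩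
  have hnsub : H.neighborFinset v ⊆ (keepSet G' L data v).erase v := by
    intro b hb
    rw [SimpleGraph.mem_neighborFinset] at hb
    refine Finset.mem_erase.mpr ⟨fun h => H.loopless.irrefl v (h ▸ hb), ?_⟩
    exact hb.2.1 hv
  have hdeg : H.degree v ≤ 6 := by
    rw [← SimpleGraph.card_neighborFinset_eq_degree]
    calc (H.neighborFinset v).card ≤ ((keepSet G' L data v).erase v).card :=
        Finset.card_le_card hnsub
      _ = (keepSet G' L data v).card - 1 := Finset.card_erase_of_mem hvkeep
      _ ≤ 6 := by omega
  refine ⟨hdeg, ?_⟩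
  calc (closedNbhd H v).card ≤ (H.neighborFinset v).card + 1 := Finset.card_insert_le _ _
    _ ≤ 7 := by rw [SimpleGraph.card_neighborFinset_eq_degree]; omega
end

section
/- Let G be a general-ladder with layers L_0, L_1, …, L_M, let i∈{0,1,2}, let R_i = ∪_{j≥0} L_{3j+i}, let G_i be the corresponding subinstance, and let H_i be the reduced graph of G_i. Then OPT_f(H_i) ≤ 2·OPT_f(G_i), where OPT_f denotes the optimal value of the LP relaxation of capacitated domination. -/
open Finset

variable {V : Type*} [Fintype V] [DecidableEq V]

set_option linter.unusedSectionVars false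
set_option maxHeartbeats 1000000

section AuxProofs

lemma mem_closedNbhd_iff {G : SimpleGraph V} [DecidableRel G.Adj] {u v : V} :
    v ∈ closedNbhd G u ↔ v = u ∨ G.Adj u v := by
  simp [closedNbhd, SimpleGraph.mem_neighborFinset]

lemma self_mem_closedNbhd (G : SimpleGraph V) [DecidableRel G.Adj] (u : V) :
    u ∈ closedNbhd G u := mem_closedNbhd_iff.2 (Or.inl rfl)

lemma mem_closedNbhd_comm {G : SimpleGraph V} [DecidableRel G.Adj] {u v : V} :
    v ∈ closedNbhd G u ↔ u ∈ closedNbhd G v := by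
  rw [mem_closedNbhd_iff, mem_closedNbhd_iff, G.adj_comm, eq_comm]

lemma list_getD_eq_get {l : List V} {n : ℕ} (h : n < l.length) (a : V) :
    l.getD n a = l.get ⟨n, h⟩ := by
  simp [List.getD_eq_getElem?_getD, List.getElem?_eq_getElem h]

lemma exists_LPFeasible (G : SimpleGraph V) [DecidableRel G.Adj] (c d : V → ℝ)
    (hc : ∀ v, 0 < c v) (hd : ∀ v, 0 ≤ d v) : ∃ x f, LPFeasible G c d x f := by
  classical
  refine ⟨fun u => 1 + d u / c u, fun u v => if v = u then d u else 0,
    ?_, ⟨?_, ?_⟩, ?_, ?_, ?_⟩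
  · intro u; have := div_nonneg (hd u) (hc u).le; linarith
  · intro u v; dsimp only; split
    · exact hd u
    · exact le_refl 0
  · intro u v hv; dsimp only
    rw [if_neg (show v ≠ u from fun h => hv (by rw [h]; exact self_mem_closedNbhd G u))]
  · intro u
    dsimp only
    rw [Finset.sum_ite_eq' (closedNbhd G u) u (fun _ => d u),
      if_pos (self_mem_closedNbhd G u)]
  · intro u
    dsimp only
    have h1 : ∑ v ∈ closedNbhd G u, (if u = v then d v else 0) = d u := by
      rw [Finset.sum_ite_eq (closedNbhd G u) u (fun v => d v),
        if_pos (self_mem_closedNbhd G u)]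
    rw [h1]
    have h2 : c u * (1 + d u / c u) = c u + d u := by
      have := (hc u).ne'
      field_simp
    rw [h2]; linarith [(hc u).le]
  · intro u v hv
    dsimp only
    by_cases h : u = v
    · subst h
      rw [if_pos rfl]
      nlinarith [div_nonneg (hd u) (hc u).le, hd u]
    · rw [if_neg h]
      have h1 : 0 ≤ d u / c u := div_nonneg (hd u) (hc u).le
      exact mul_nonneg (hd v) (by linarith)

lemma sum_ite_le_of_subsingleton {W : ℝ} (hW : 0 ≤ W) (p : V → Prop) [DecidablePred p]
    (hp : ∀ u u', p u → p u' → u = u') :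
    ∑ u, (if p u then W else 0) ≤ W := by
  classical
  rw [← Finset.sum_filter]
  rcases (univ.filter p).eq_empty_or_nonempty with h | h
  · simp [h, hW]
  · obtain ⟨u0, hu0⟩ := h
    have hs : univ.filter p = {u0} := by
      apply Finset.eq_singleton_iff_unique_mem.2
      exact ⟨hu0, fun y hy => hp _ _ (mem_filter.1 hy).2 (mem_filter.1 hu0).2⟩
    simp [hs]

lemma transfer (G' H : SimpleGraph V) [DecidableRel G'.Adj] [DecidableRel H.Adj]
    (hsub : ∀ u, closedNbhd H u ⊆ closedNbhd G' u)
    (w c d' : V → ℝ) (hw : ∀ v, 0 ≤ w v) (hc : ∀ v, 0 < c v) (hd' : ∀ v, 0 ≤ d' v)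
    (T : V → V → V) (D : V → V → ℝ) (P : V → V → Prop)
    (hPdef : ∀ u v, P u v → d' u ≠ 0 ∧ v ∈ closedNbhd G' u ∧ v ∉ closedNbhd H u)
    (hPall : ∀ u v, d' u ≠ 0 → v ∈ closedNbhd G' u → v ∉ closedNbhd H u → P u v)
    (hT : ∀ u v, P u v → T u v ∈ closedNbhd H u)
    (hD0 : ∀ u v, P u v → 0 < D u v)
    (hDd : ∀ u v, P u v → D u v ≤ d' u)
    (hDc : ∀ u v, P u v → D u v ≤ c (T u v))
    (hch : ∀ u v, P u v → w (T u v) * d' u ≤ w v * D u v ∨ w (T u v) * c v ≤ w v * D u v)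
    (hinj : ∀ u u' v, P u v → P u' v → u = u')
    (x f : _) (hxf : LPFeasible G' c d' x f) :
    ∃ x' f', LPFeasible H c d' x' f' ∧
      ∑ u, w u * x' u ≤ ∑ u, w u * x u + ∑ v, w v * x v := by
  classical
  obtain ⟨hx0, ⟨hf0, hfsupp⟩, hdem, hcap, hdx⟩ := hxf
  -- derived facts on the original solution
  have hfdx : ∀ u v, v ∈ closedNbhd G' u → f u v ≤ d' u * x v := fun u v hvN =>
    hdx v u (mem_closedNbhd_comm.1 hvN)
  have hfcx : ∀ u v, v ∈ closedNbhd G' u → f u v ≤ c v * x v := fun u v hvN => by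
    have huN : u ∈ closedNbhd G' v := mem_closedNbhd_comm.1 hvN
    calc f u v ≤ ∑ s ∈ closedNbhd G' v, f s v :=
          Finset.single_le_sum (fun s _ => hf0 s v) huN
      _ ≤ c v * x v := hcap v
  -- the rerouted amounts and increments
  set F : V → V → ℝ := fun u v => if P u v then f u v else 0 with hF
  set A : V → V → ℝ := fun u v => if P u v then f u v / D u v else 0 with hA
  set Δ : V → ℝ := fun t => ∑ u, ∑ v, (if T u v = t then A u v else 0) with hΔ
  have hF0 : ∀ u v, 0 ≤ F u v := by
    intro u v; rw [hF]; dsimp only; split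
    · exact hf0 u v
    · exact le_refl 0
  have hA0 : ∀ u v, 0 ≤ A u v := by
    intro u v; rw [hA]; dsimp only; split
    · exact div_nonneg (hf0 u v) (hD0 u v (by assumption)).le
    · exact le_refl 0
  have hΔterm0 : ∀ t u v, 0 ≤ (if T u v = t then A u v else 0) := by
    intro t u v; split
    · exact hA0 u v
    · exact le_refl 0
  have hΔ0 : ∀ t, 0 ≤ Δ t := by
    intro t; rw [hΔ]; dsimp only
    exact Finset.sum_nonneg fun u _ => Finset.sum_nonneg fun v _ => hΔterm0 t u v
  -- key termwise bounds
  have hFc : ∀ t u v, (if T u v = t then F u v else 0) ≤ c t * (if T u v = t then A u v else 0) := by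
    intro t u v
    by_cases hTt : T u v = t
    · rw [if_pos hTt, if_pos hTt, hF, hA]; dsimp only
      by_cases hP : P u v
      · rw [if_pos hP, if_pos hP]
        have h1 : 0 < D u v := hD0 u v hP
        have h2 : D u v ≤ c (T u v) := hDc u v hP
        rw [hTt] at h2
        linarith [mul_le_mul_of_nonneg_left h2 (div_nonneg (hf0 u v) h1.le),
          div_mul_cancel₀ (f u v) h1.ne']
      · rw [if_neg hP, if_neg hP, mul_zero]
    · rw [if_neg hTt, if_neg hTt, mul_zero]
  have hFd : ∀ t u v, (if T u v = t then F u v else 0) ≤ d' u * (if T u v = t then A u v else 0) := by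
    intro t u v
    by_cases hTt : T u v = t
    · rw [if_pos hTt, if_pos hTt, hF, hA]; dsimp only
      by_cases hP : P u v
      · rw [if_pos hP, if_pos hP]
        have h1 : 0 < D u v := hD0 u v hP
        have h2 : D u v ≤ d' u := hDd u v hP
        linarith [mul_le_mul_of_nonneg_left h2 (div_nonneg (hf0 u v) h1.le),
          div_mul_cancel₀ (f u v) h1.ne']
      · rw [if_neg hP, if_neg hP, mul_zero]
    · rw [if_neg hTt, if_neg hTt, mul_zero]
  refine ⟨fun t => x t + Δ t,
    fun u t => (if t ∈ closedNbhd H u then f u t else 0) + ∑ v, (if T u v = t then F u v else 0),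
    ⟨?_, ⟨?_, ?_⟩, ?_, ?_, ?_⟩, ?_⟩
  · exact fun t => add_nonneg (hx0 t) (hΔ0 t)
  · intro u t
    apply add_nonneg
    · split
      · exact hf0 u t
      · exact le_refl 0
    · exact Finset.sum_nonneg fun v _ => by
        split
        · exact hF0 u v
        · exact le_refl 0
  · -- support
    intro u t ht
    dsimp only
    rw [if_neg ht, zero_add]
    apply Finset.sum_eq_zero
    intro v _
    by_cases hTt : T u v = t
    · rw [if_pos hTt, hF]; dsimp only
      by_cases hP : P u v
      · exact absurd (hTt ▸ hT u v hP) ht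
      · rw [if_neg hP]
    · rw [if_neg hTt]
  · -- demand
    intro u
    dsimp only
    rw [Finset.sum_add_distrib]
    have e1 : ∑ t ∈ closedNbhd H u, (if t ∈ closedNbhd H u then f u t else 0)
        = ∑ t ∈ closedNbhd H u, f u t :=
      Finset.sum_congr rfl fun t ht => if_pos ht
    have e2 : ∑ t ∈ closedNbhd H u, ∑ v, (if T u v = t then F u v else 0)
        = ∑ v, F u v := by
      rw [Finset.sum_comm]
      apply Finset.sum_congr rfl
      intro v _
      rw [Finset.sum_ite_eq (closedNbhd H u) (T u v) (fun _ => F u v)]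
      by_cases hP : P u v
      · rw [if_pos (hT u v hP)]
      · have : F u v = 0 := by rw [hF]; dsimp only; rw [if_neg hP]
        rw [this]; split <;> rfl
    rw [e1, e2]
    by_cases hdu : d' u = 0
    · rw [hdu]
      exact add_nonneg (Finset.sum_nonneg fun t _ => hf0 u t)
        (Finset.sum_nonneg fun v _ => hF0 u v)
    · have e3 : ∑ v, F u v = ∑ v ∈ closedNbhd G' u \ closedNbhd H u, f u v := by
        rw [hF]; dsimp only
        rw [← Finset.sum_filter]
        apply Finset.sum_congr _ (fun _ _ => rfl)
        ext v
        simp only [Finset.mem_filter, Finset.mem_univ, true_and, Finset.mem_sdiff]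
        constructor
        · intro hP
          exact ⟨(hPdef u v hP).2.1, (hPdef u v hP).2.2⟩
        · intro ⟨h1, h2⟩
          exact hPall u v hdu h1 h2
      rw [e3, add_comm, Finset.sum_sdiff (hsub u)]
      exact hdem u
  · -- capacity
    intro t
    dsimp only
    rw [Finset.sum_add_distrib]
    have e1 : ∑ v ∈ closedNbhd H t, (if t ∈ closedNbhd H v then f v t else 0)
        ≤ c t * x t := by
      calc ∑ v ∈ closedNbhd H t, (if t ∈ closedNbhd H v then f v t else 0)
          ≤ ∑ v ∈ closedNbhd H t, f v t := by
            apply Finset.sum_le_sum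
            intro v _
            split
            · exact le_refl _
            · exact hf0 v t
        _ ≤ ∑ v ∈ closedNbhd G' t, f v t :=
            Finset.sum_le_sum_of_subset_of_nonneg (hsub t) (fun v _ _ => hf0 v t)
        _ ≤ c t * x t := hcap t
    have e2 : ∑ v ∈ closedNbhd H t, ∑ v', (if T v v' = t then F v v' else 0)
        ≤ c t * Δ t := by
      have e2a : ∑ v ∈ closedNbhd H t, ∑ v', (if T v v' = t then F v v' else 0)
          = ∑ v, ∑ v', (if T v v' = t then F v v' else 0) := by
        apply Finset.sum_subset (Finset.subset_univ _)
        intro v _ hv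
        apply Finset.sum_eq_zero
        intro v' _
        by_cases hTt : T v v' = t
        · rw [if_pos hTt, hF]; dsimp only
          by_cases hP : P v v'
          · exact absurd (mem_closedNbhd_comm.1 (hTt ▸ hT v v' hP)) hv
          · rw [if_neg hP]
        · rw [if_neg hTt]
      rw [e2a, hΔ]; dsimp only
      rw [Finset.mul_sum]
      apply Finset.sum_le_sum
      intro v _
      rw [Finset.mul_sum]
      exact Finset.sum_le_sum fun v' _ => hFc t v v'
    calc ∑ v ∈ closedNbhd H t, (if t ∈ closedNbhd H v then f v t else 0)
          + ∑ v ∈ closedNbhd H t, ∑ v', (if T v v' = t then F v v' else 0)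
        ≤ c t * x t + c t * Δ t := add_le_add e1 e2
      _ = c t * (x t + Δ t) := by ring
  · -- per-demand constraint
    intro t v hv
    dsimp only
    have h1 : (if t ∈ closedNbhd H v then f v t else 0) ≤ d' v * x t := by
      rw [if_pos (mem_closedNbhd_comm.1 hv)]
      exact hdx t v (hsub t hv)
    have h2 : ∑ v', (if T v v' = t then F v v' else 0) ≤ d' v * Δ t := by
      calc ∑ v', (if T v v' = t then F v v' else 0)
          ≤ ∑ v', d' v * (if T v v' = t then A v v' else 0) :=
            Finset.sum_le_sum fun v' _ => hFd t v v'
        _ = d' v * ∑ v', (if T v v' = t then A v v' else 0) := by rw [Finset.mul_sum]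
        _ ≤ d' v * Δ t := by
            apply mul_le_mul_of_nonneg_left _ (hd' v)
            rw [hΔ]; dsimp only
            exact Finset.single_le_sum
              (fun u _ => Finset.sum_nonneg fun v' _ => hΔterm0 t u v')
              (Finset.mem_univ v)
    calc (if t ∈ closedNbhd H v then f v t else 0)
          + ∑ v', (if T v v' = t then F v v' else 0)
        ≤ d' v * x t + d' v * Δ t := add_le_add h1 h2
      _ = d' v * (x t + Δ t) := by ring
  · -- cost
    have e0 : ∑ u, w u * (x u + Δ u) = ∑ u, w u * x u + ∑ t, w t * Δ t := by
      rw [← Finset.sum_add_distrib]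
      exact Finset.sum_congr rfl fun u _ => by ring
    rw [e0]
    apply add_le_add (le_refl _)
    have e1 : ∑ t, w t * Δ t = ∑ u, ∑ v, w (T u v) * A u v := by
      rw [hΔ]
      simp only [Finset.mul_sum, mul_ite, mul_zero]
      rw [Finset.sum_comm]
      apply Finset.sum_congr rfl
      intro u _
      rw [Finset.sum_comm]
      apply Finset.sum_congr rfl
      intro v _
      rw [Finset.sum_ite_eq Finset.univ (T u v) (fun t => w t * A u v),
        if_pos (Finset.mem_univ _)]
    rw [e1]
    have e2 : ∀ u v, w (T u v) * A u v ≤ (if P u v then w v * x v else 0) := by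
      intro u v
      by_cases hP : P u v
      · rw [if_pos hP, hA]; dsimp only
        rw [if_pos hP]
        have hD := hD0 u v hP
        have hvN := (hPdef u v hP).2.1
        rw [← mul_div_assoc, div_le_iff₀ hD]
        rcases hch u v hP with hA1 | hA2
        · have hf1 : f u v ≤ d' u * x v := hfdx u v hvN
          nlinarith [mul_le_mul_of_nonneg_left hf1 (hw (T u v)),
            mul_le_mul_of_nonneg_right hA1 (hx0 v)]
        · have hf2 : f u v ≤ c v * x v := hfcx u v hvN
          nlinarith [mul_le_mul_of_nonneg_left hf2 (hw (T u v)),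
            mul_le_mul_of_nonneg_right hA2 (hx0 v)]
      · rw [if_neg hP, hA]; dsimp only
        rw [if_neg hP, mul_zero]
    calc ∑ u, ∑ v, w (T u v) * A u v
        ≤ ∑ u, ∑ v, (if P u v then w v * x v else 0) :=
          Finset.sum_le_sum fun u _ => Finset.sum_le_sum fun v _ => e2 u v
      _ = ∑ v, ∑ u, (if P u v then w v * x v else 0) := Finset.sum_comm
      _ ≤ ∑ v, w v * x v := by
          apply Finset.sum_le_sum
          intro v _
          exact sum_ite_le_of_subsingleton (mul_nonneg (hw v) (hx0 v))
            (fun u => P u v) (fun u u' h h' => hinj u u' v h h')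

lemma reduction_LP_aux [LinearOrder V]
    (G G' : SimpleGraph V) [DecidableRel G.Adj] [DecidableRel G'.Adj]
    (L : V → ℕ) (hGL : IsGeneralLadder G L)
    (w c d : V → ℝ) (hw : ∀ v, 0 ≤ w v) (hc : ∀ v, 0 < c v) (hd : ∀ v, 0 ≤ d v)
    (i : ℕ)
    (R : Finset V) (hmemR : ∀ v, v ∈ R ↔ L v % 3 = i)
    (hG'adj : ∀ a b, G'.Adj a b ↔ (G.Adj a b ∧ (a ∈ R ∨ b ∈ R)))
    (data : ReductionData G' w c d R) :
    OPTf (reducedGraph G' L data) w c (subDemand d R) ≤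
      2 * OPTf G' w c (subDemand d R) := by
  classical
  set H : SimpleGraph V := reducedGraph G' L data with hHdef
  set d' : V → ℝ := subDemand d R with hd'def
  -- basic facts
  have hd'0 : ∀ v, 0 ≤ d' v := by
    intro v; rw [hd'def]; unfold subDemand; split
    · exact hd v
    · exact le_refl 0
  have hd'eq : ∀ v, v ∈ R → d' v = d v := by
    intro v hv; rw [hd'def]; unfold subDemand; rw [if_pos hv]
  have hd'n : ∀ v, v ∉ R → d' v = 0 := by
    intro v hv; rw [hd'def]; unfold subDemand; rw [if_neg hv]
  have hG'G : ∀ a b, G'.Adj a b → G.Adj a b := fun a b h => ((hG'adj a b).1 h).1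
  have hsub : ∀ u, closedNbhd H u ⊆ closedNbhd G' u := by
    intro u t ht
    rcases mem_closedNbhd_iff.1 ht with h | h
    · exact mem_closedNbhd_iff.2 (Or.inl h)
    · exact mem_closedNbhd_iff.2 (Or.inr (by rw [hHdef] at h; exact h.1))
  have hsame : ∀ u v, u ∈ R → v ∈ R → G.Adj u v → L v = L u := by
    intro u v hu hv hadj
    have h1 := hGL.adj_layers u v hadj
    have h2 := (hmemR u).1 hu
    have h3 := (hmemR v).1 hv
    omega
  have hadj_of : ∀ u q, q ∈ closedNbhd G' u → L q ≠ L u → G.Adj u q := by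
    intro u q hq hne
    rcases mem_closedNbhd_iff.1 hq with h | h
    · exact absurd (by rw [h]) hne
    · exact hG'G u q h
  have hkeep_same : ∀ u v, v ∈ closedNbhd G' u → L v = L u → v ∈ keepSet G' L data u := by
    intro u v h1 h2
    exact Finset.mem_union_left _ (Finset.mem_union_left _
      (Finset.mem_union_left _ (Finset.mem_filter.2 ⟨h1, h2⟩)))
  have hkeep_jk : ∀ u t, t ∈ ({(data.l u).getD (data.jIdx u) u,
      (data.l u).getD (data.kIdx u) u} : Finset V) → t ∈ keepSet G' L data u := by
    intro u t ht
    exact Finset.mem_union_left _ (Finset.mem_union_left _ (Finset.mem_union_right _ ht))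
  have hedge : ∀ u t, u ∈ R → t ∈ closedNbhd G' u → t ∈ keepSet G' L data u →
      t ∈ closedNbhd H u := by
    intro u t huR htN hk
    rcases mem_closedNbhd_iff.1 htN with h | hadj
    · rw [h]; exact self_mem_closedNbhd H u
    · refine mem_closedNbhd_iff.2 (Or.inr ?_)
      rw [hHdef]
      refine ⟨hadj, fun _ => hk, fun htR => ?_⟩
      exact hkeep_same t u (mem_closedNbhd_iff.2 (Or.inr hadj.symm))
        (hsame u t huR htR (hG'G u t hadj)).symm
  -- the rerouting scheme
  set P : V → V → Prop := fun u v => d' u ≠ 0 ∧ v ∈ closedNbhd G' u ∧ v ∉ closedNbhd H u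
    with hPdef
  have hPfacts : ∀ u v, P u v → u ∈ R ∧ G'.Adj u v ∧ v ∉ keepSet G' L data u ∧
      v ∈ data.l u ∧ (L v = L u + 1 ∨ L u = L v + 1) := by
    rintro u v ⟨hdu, hvN, hvnH⟩
    have huR : u ∈ R := by
      by_contra hnot
      exact hdu (hd'n u hnot)
    have hvne : v ≠ u := fun h => hvnH (by rw [h]; exact self_mem_closedNbhd H u)
    have hadj : G'.Adj u v := (mem_closedNbhd_iff.1 hvN).resolve_left hvne
    have hnk : v ∉ keepSet G' L data u := fun hk => hvnH (hedge u v huR hvN hk)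
    have hLne : L v ≠ L u := fun hL => hnk (hkeep_same u v hvN hL)
    have hlay := hGL.adj_layers u v (hG'G u v hadj)
    exact ⟨huR, hadj, hnk, (data.mem_iff u huR v).2 hvN, by omega⟩
  set T : V → V → V := fun u v =>
    if (data.l u).idxOf v < data.jIdx u then (data.l u).getD (data.kIdx u) u
    else (data.l u).getD (data.jIdx u) u with hTdef
  set D : V → V → ℝ := fun u v =>
    if (data.l u).idxOf v < data.jIdx u then c (T u v) else d' u with hDdef
  have hcase : ∀ u v, P u v →
      T u v ∈ closedNbhd H u ∧ 0 < D u v ∧ D u v ≤ d' u ∧ D u v ≤ c (T u v) ∧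
      (w (T u v) * d' u ≤ w v * D u v ∨ w (T u v) * c v ≤ w v * D u v) := by
    intro u v hP
    obtain ⟨huR, hadj, hnk, hvl, hlay⟩ := hPfacts u v hP
    have hdu' : 0 < d' u := lt_of_le_of_ne (hd'0 u) (Ne.symm hP.1)
    have hdeq : d' u = d u := hd'eq u huR
    have hm : (data.l u).idxOf v < (data.l u).length := List.idxOf_lt_length_iff.2 hvl
    have hgetm : (data.l u).get ⟨(data.l u).idxOf v, hm⟩ = v := List.idxOf_get hm
    by_cases hcs : (data.l u).idxOf v < data.jIdx u
    · -- rerouting to k_u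
      have hjpos : 0 < data.jIdx u := lt_of_le_of_lt (Nat.zero_le _) hcs
      have hklt : data.kIdx u < data.jIdx u := data.kIdx_lt_j u huR hjpos
      have hklen : data.kIdx u < (data.l u).length :=
        lt_of_lt_of_le hklt (data.jIdx_le u huR)
      have hTval : T u v = (data.l u).get ⟨data.kIdx u, hklen⟩ := by
        rw [hTdef]; dsimp only; rw [if_pos hcs, list_getD_eq_get hklen]
      have hDval : D u v = c (T u v) := by rw [hDdef]; dsimp only; rw [if_pos hcs]
      have hTl : T u v ∈ data.l u := by rw [hTval]; exact List.get_mem _ _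
      have hTN : T u v ∈ closedNbhd G' u := (data.mem_iff u huR _).1 hTl
      have hTkeep : T u v ∈ keepSet G' L data u := by
        apply hkeep_jk
        rw [hTval, ← list_getD_eq_get hklen]
        exact Finset.mem_insert.2 (Or.inr (Finset.mem_singleton_self _))
      refine ⟨hedge u _ huR hTN hTkeep, ?_, ?_, ?_, Or.inr ?_⟩
      · rw [hDval]; exact hc _
      · rw [hDval, hdeq, hTval]; exact data.c_le_before_j u huR _ hklen hklt
      · rw [hDval]
      · have hr := data.k_ratio_min u huR _ hm hcs hklen
        rw [hgetm] at hr
        rw [div_le_div_iff₀ (hc _) (hc _)] at hr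
        rw [hDval, hTval]
        exact hr
    · -- rerouting to j_u
      have hle : data.jIdx u ≤ (data.l u).idxOf v := not_lt.1 hcs
      have hjlen : data.jIdx u < (data.l u).length := lt_of_le_of_lt hle hm
      have hTval : T u v = (data.l u).get ⟨data.jIdx u, hjlen⟩ := by
        rw [hTdef]; dsimp only; rw [if_neg hcs, list_getD_eq_get hjlen]
      have hDval : D u v = d' u := by rw [hDdef]; dsimp only; rw [if_neg hcs]
      have hTl : T u v ∈ data.l u := by rw [hTval]; exact List.get_mem _ _
      have hTN : T u v ∈ closedNbhd G' u := (data.mem_iff u huR _).1 hTl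
      have hTkeep : T u v ∈ keepSet G' L data u := by
        apply hkeep_jk
        rw [hTval, ← list_getD_eq_get hjlen]
        exact Finset.mem_insert_self _ _
      have hwle : w (T u v) ≤ w v := by
        rcases eq_or_lt_of_le hle with heq | hlt
        · have hfin : (⟨data.jIdx u, hjlen⟩ : Fin (data.l u).length)
              = ⟨(data.l u).idxOf v, hm⟩ := Fin.ext heq
          rw [hTval, hfin, hgetm]
        · rw [hTval, ← hgetm]
          exact List.Pairwise.rel_get_of_lt (data.sorted u huR) (Fin.mk_lt_mk.2 hlt)
      refine ⟨hedge u _ huR hTN hTkeep, ?_, ?_, ?_, Or.inl ?_⟩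
      · rw [hDval]; exact hdu'
      · rw [hDval]
      · rw [hDval, hdeq, hTval]; exact (data.c_gt_at_j u huR hjlen).le
      · rw [hDval]; exact mul_le_mul_of_nonneg_right hwle (hd'0 u)
  -- injectivity of the removed pairs
  have hbig_up : ∀ u v, v ∈ closedNbhd G' u → L v = L u + 1 →
      v ∉ keepSet G' L data u → ∃ q, q ∈ closedNbhd G' u ∧ L q = L u + 1 ∧ v < q := by
    intro u v h1 h2 h3
    have hvs : v ∈ (closedNbhd G' u).filter (fun x => L x = L u + 1) :=
      Finset.mem_filter.2 ⟨h1, h2⟩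
    have hnm : v ∉ maxSet ((closedNbhd G' u).filter (fun x => L x = L u + 1)) :=
      fun hmax => h3 (Finset.mem_union_right _ hmax)
    rw [maxSet, Finset.mem_filter] at hnm
    push_neg at hnm
    obtain ⟨q, hqs, hq⟩ := hnm hvs
    exact ⟨q, (Finset.mem_filter.1 hqs).1, (Finset.mem_filter.1 hqs).2, hq⟩
  have hbig_down : ∀ u v, v ∈ closedNbhd G' u → L v + 1 = L u →
      v ∉ keepSet G' L data u → ∃ p, p ∈ closedNbhd G' u ∧ L p + 1 = L u ∧ v < p := by
    intro u v h1 h2 h3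
    have hvs : v ∈ (closedNbhd G' u).filter (fun x => L x + 1 = L u) :=
      Finset.mem_filter.2 ⟨h1, h2⟩
    have hnm : v ∉ maxSet ((closedNbhd G' u).filter (fun x => L x + 1 = L u)) :=
      fun hmax => h3 (Finset.mem_union_left _ (Finset.mem_union_right _ hmax))
    rw [maxSet, Finset.mem_filter] at hnm
    push_neg at hnm
    obtain ⟨p, hps, hp⟩ := hnm hvs
    exact ⟨p, (Finset.mem_filter.1 hps).1, (Finset.mem_filter.1 hps).2, hp⟩
  have hinj : ∀ u u' v, P u v → P u' v → u = u' := by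
    intro u u' v hP hP'
    obtain ⟨huR, hadj, hnk, _, hlay⟩ := hPfacts u v hP
    obtain ⟨huR', hadj', hnk', _, hlay'⟩ := hPfacts u' v hP'
    have hmod := (hmemR u).1 huR
    have hmod' := (hmemR u').1 huR'
    have hLuu' : L u = L u' := by omega
    have hvN : v ∈ closedNbhd G' u := mem_closedNbhd_iff.2 (Or.inr hadj)
    have hvN' : v ∈ closedNbhd G' u' := mem_closedNbhd_iff.2 (Or.inr hadj')
    rcases hlay with hup | hdown
    · have hup' : L v = L u' + 1 := by omega
      by_contra hne
      rcases lt_or_gt_of_ne hne with hlt | hgt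
      · obtain ⟨q, hqN, hqL, hvq⟩ := hbig_up u v hvN hup hnk
        have hqadj : G.Adj u q := hadj_of u q hqN (by omega)
        have := hGL.mono u u' hLuu' hlt q v hqadj (hG'G u' v hadj') hqL (by omega)
        exact absurd this (not_le.2 hvq)
      · obtain ⟨q, hqN, hqL, hvq⟩ := hbig_up u' v hvN' hup' hnk'
        have hqadj : G.Adj u' q := hadj_of u' q hqN (by omega)
        have := hGL.mono u' u hLuu'.symm hgt q v hqadj (hG'G u v hadj) hqL (by omega)
        exact absurd this (not_le.2 hvq)
    · have hdown' : L u' = L v + 1 := by omega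
      obtain ⟨p, hpN, hpL, hvp⟩ := hbig_down u v hvN (by omega) hnk
      obtain ⟨p', hpN', hpL', hvp'⟩ := hbig_down u' v hvN' (by omega) hnk'
      have hpadj : G.Adj u p := hadj_of u p hpN (by omega)
      have hpadj' : G.Adj u' p' := hadj_of u' p' hpN' (by omega)
      have h1 : u' ≤ u := hGL.mono v p (by omega) hvp u' u
        (hG'G u' v hadj').symm hpadj.symm (by omega) (by omega)
      have h2 : u ≤ u' := hGL.mono v p' (by omega) hvp' u u'
        (hG'G u v hadj).symm hpadj'.symm (by omega) (by omega)
      exact le_antisymm h2 h1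
  -- apply the transfer lemma and conclude
  have key := fun x f hxf => transfer G' H hsub w c d' hw hc hd'0 T D P
    (fun u v hP => hP) (fun u v h1 h2 h3 => ⟨h1, h2, h3⟩)
    (fun u v hP => (hcase u v hP).1) (fun u v hP => (hcase u v hP).2.1)
    (fun u v hP => (hcase u v hP).2.2.1) (fun u v hP => (hcase u v hP).2.2.2.1)
    (fun u v hP => (hcase u v hP).2.2.2.2) hinj x f hxf
  set SH : Set ℝ := {r | ∃ x f, LPFeasible H c d' x f ∧ ∑ u, w u * x u = r} with hSH
  set SG : Set ℝ := {r | ∃ x f, LPFeasible G' c d' x f ∧ ∑ u, w u * x u = r} with hSG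
  have hOPTH : OPTf H w c d' = sInf SH := rfl
  have hOPTG : OPTf G' w c d' = sInf SG := rfl
  have hSHne : SH.Nonempty := by
    obtain ⟨x, f, hxf⟩ := exists_LPFeasible H c d' hc hd'0
    exact ⟨_, x, f, hxf, rfl⟩
  have hSGne : SG.Nonempty := by
    obtain ⟨x, f, hxf⟩ := exists_LPFeasible G' c d' hc hd'0
    exact ⟨_, x, f, hxf, rfl⟩
  have hSHbdd : BddBelow SH := by
    refine ⟨0, ?_⟩
    rintro r ⟨x, f, hxf, rfl⟩
    exact Finset.sum_nonneg fun u _ => mul_nonneg (hw u) (hxf.1 u)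
  have hkey : ∀ r ∈ SG, sInf SH ≤ 2 * r := by
    rintro r ⟨x, f, hxf, rfl⟩
    obtain ⟨x', f', hxf', hcost⟩ := key x f hxf
    have h1 : sInf SH ≤ ∑ u, w u * x' u := csInf_le hSHbdd ⟨x', f', hxf', rfl⟩
    linarith
  rw [hOPTH, hOPTG]
  by_contra hcon
  push_neg at hcon
  obtain ⟨r, hrS, hrlt⟩ := exists_lt_of_csInf_lt hSGne
    (show sInf SG < sInf SH / 2 by linarith)
  have := hkey r hrS
  linarith



end AuxProofs

/-- the reduction at most doubles the optimal LP value: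
`OPT_f(H_i) ≤ 2·OPT_f(G_i)`. -/
theorem reduction_LP_bound [LinearOrder V]
    (G : SimpleGraph V) [DecidableRel G.Adj] (L : V → ℕ)
    (hGL : IsGeneralLadder G L)
    (w c d : V → ℝ) (hw : ∀ v, 0 ≤ w v) (hc : ∀ v, 0 < c v) (hd : ∀ v, 0 ≤ d v)
    (i : ℕ) (hi : i < 3)
    (data : ReductionData (subGraph G (layerClass L i)) w c d (layerClass L i)) :
    OPTf (reducedGraph (subGraph G (layerClass L i)) L data) w c
        (subDemand d (layerClass L i)) ≤
      2 * OPTf (subGraph G (layerClass L i)) w c (subDemand d (layerClass L i)) :=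
  reduction_LP_aux G (subGraph G (layerClass L i)) L hGL w c d hw hc hd i
    (layerClass L i) (fun v => by simp [layerClass]) (fun a b => Iff.rfl) data
end
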